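/- arXiv:1403.0876 — 2 statements merged into one kernel-verified Lean document; each statement's English description precedes it below -/
import Mathlib

section
/- Let C be an F-linear additive rigid symmetric monoidal category over a field F. For objects a, b of C, define ⊗_nil(a,b) = { f ∈ Hom_C(a,b) | f^{⊗n} = 0 for some n > 0 }, where f^{⊗n} : a^{⊗n} → b^{⊗n} is the n-fold tensor power of f. Then ⊗_nil(a,b) is an additive subgroup of Hom_C(a,b) for all a, b. -/
open CategoryTheory MonoidalCategory

universe u v

noncomputable section

set_option linter.unusedSectionVars false
set_option linter.unnecessarySeqFocus false

variable {C : Type u} [Category.{v} C] [MonoidalCategory C]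

/-- The `n`-fold tensor power of an object. -/
def tpowObj (a : C) : ℕ → C
  | 0 => 𝟙_ C
  | n + 1 => tpowObj a n ⊗ a

/-- The `n`-fold tensor power of a morphism. -/
def tpowHom {a b : C} (f : a ⟶ b) : (n : ℕ) → (tpowObj a n ⟶ tpowObj b n)
  | 0 => 𝟙 _
  | n + 1 => tpowHom f n ⊗ₘ f

/-- A "mixed word" in two morphisms `f g : a ⟶ b`, tensoring `f` at positions where
`v` is `true` and `g` elsewhere. -/
def wHom {a b : C} (f g : a ⟶ b) : (n : ℕ) → (Fin n → Bool) → (tpowObj a n ⟶ tpowObj b n)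
  | 0, _ => 𝟙 _
  | n + 1, v => wHom f g n (Fin.init v) ⊗ₘ (if v (Fin.last n) then f else g)

lemma wHom_succ {a b : C} (f g : a ⟶ b) (n : ℕ) (v : Fin (n + 1) → Bool) :
    wHom f g (n + 1) v = MonoidalCategoryStruct.tensorHom (X₁ := tpowObj a n)
      (wHom f g n (Fin.init v)) (if v (Fin.last n) then f else g) := rfl

section Braided

variable [BraidedCategory C]

/-- The iso `(X ⊗ Y) ⊗ Z ≅ (X ⊗ Z) ⊗ Y`. -/
def sigmaIso (X Y Z : C) : (X ⊗ Y) ⊗ Z ≅ (X ⊗ Z) ⊗ Y :=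
  α_ X Y Z ≪≫ whiskerLeftIso X (β_ Y Z) ≪≫ (α_ X Z Y).symm

lemma sigma_nat {x1 x2 y1 y2 z1 z2 : C} (F : x1 ⟶ x2) (G : y1 ⟶ y2) (h : z1 ⟶ z2) :
    ((F ⊗ₘ G) ⊗ₘ h) ≫ (sigmaIso x2 y2 z2).hom
      = (sigmaIso x1 y1 z1).hom ≫ ((F ⊗ₘ h) ⊗ₘ G) := by
  show ((F ⊗ₘ G) ⊗ₘ h) ≫ ((α_ x2 y2 z2).hom ≫ (x2 ◁ (β_ y2 z2).hom) ≫ (α_ x2 z2 y2).inv)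
      = ((α_ x1 y1 z1).hom ≫ (x1 ◁ (β_ y1 z1).hom) ≫ (α_ x1 z1 y1).inv) ≫ ((F ⊗ₘ h) ⊗ₘ G)
  rw [← Category.assoc, associator_naturality, Category.assoc]
  rw [tensorHom_def F (G ⊗ₘ h), Category.assoc]
  slice_lhs 3 4 =>
    rw [← MonoidalCategory.whiskerLeft_comp, BraidedCategory.braiding_naturality,
      MonoidalCategory.whiskerLeft_comp]
  slice_lhs 2 3 => rw [← whisker_exchange]
  slice_lhs 3 4 => rw [← MonoidalCategory.tensorHom_def]
  slice_lhs 3 4 => rw [associator_inv_naturality]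
  simp

lemma sigma_fact {x1 x2 y1 y2 z1 z2 : C} (F : x1 ⟶ x2) (G : y1 ⟶ y2) (h : z1 ⟶ z2) :
    (F ⊗ₘ G) ⊗ₘ h
      = (sigmaIso x1 y1 z1).hom ≫ ((F ⊗ₘ h) ⊗ₘ G) ≫ (sigmaIso x2 y2 z2).inv := by
  rw [← Category.assoc, ← sigma_nat]
  simp

lemma assoc_fact {x1 x2 y1 y2 z1 z2 : C} (F : x1 ⟶ x2) (G : y1 ⟶ y2) (h : z1 ⟶ z2) :
    (F ⊗ₘ G) ⊗ₘ h
      = (α_ x1 y1 z1).hom ≫ (F ⊗ₘ (G ⊗ₘ h)) ≫ (α_ x2 y2 z2).inv := by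
  rw [← Category.assoc, ← associator_naturality]
  simp

lemma comp_tensor_left {a b x y z : C} (u : x ⟶ y) (w : y ⟶ z) (f : a ⟶ b) :
    (u ≫ w) ⊗ₘ f = (u ⊗ₘ 𝟙 a) ≫ (w ⊗ₘ f) := by
  rw [tensorHom_comp_tensorHom]; simp

lemma comp_tensor_right {a b x y z : C} (u : x ⟶ y) (w : y ⟶ z) (f : a ⟶ b) :
    (u ≫ w) ⊗ₘ f = (u ⊗ₘ f) ≫ (w ⊗ₘ 𝟙 b) := by
  rw [tensorHom_comp_tensorHom]; simp

lemma wHom_factor {a b : C} (f g : a ⟶ b) : ∀ (N : ℕ) (v : Fin N → Bool),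
    ∃ (k l : ℕ) (ea : tpowObj a N ≅ tpowObj a k ⊗ tpowObj a l)
      (eb : tpowObj b N ≅ tpowObj b k ⊗ tpowObj b l),
      k = (∑ i, if v i then 1 else 0) ∧ k + l = N ∧
      wHom f g N v = ea.hom ≫ (tpowHom f k ⊗ₘ tpowHom g l) ≫ eb.inv
  | 0, v => ⟨0, 0, ((λ_ (𝟙_ C)).symm : tpowObj a 0 ≅ tpowObj a 0 ⊗ tpowObj a 0),
      ((λ_ (𝟙_ C)).symm : tpowObj b 0 ≅ tpowObj b 0 ⊗ tpowObj b 0), by simp, rfl, by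
        simp [wHom, tpowHom, tpowObj]⟩
  | (N + 1), v => by
    obtain ⟨k, l, ea, eb, hk, hkl, hw⟩ := wHom_factor f g N (Fin.init v)
    by_cases hv : v (Fin.last N) = true
    · refine ⟨k + 1, l, (tensorIso ea (Iso.refl a)) ≪≫ sigmaIso _ _ _,
        (tensorIso eb (Iso.refl b)) ≪≫ sigmaIso _ _ _, ?_, by omega, ?_⟩
      · rw [Fin.sum_univ_castSucc, if_pos hv, hk]
        rfl
      · show wHom f g N (Fin.init v) ⊗ₘ (if v (Fin.last N) then f else g) = _
        rw [if_pos hv, hw, comp_tensor_left, comp_tensor_right (tpowHom f k ⊗ₘ tpowHom g l),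
          sigma_fact]
        simp only [Iso.trans_hom, Iso.trans_inv, tensorIso_hom, tensorIso_inv, Iso.refl_hom,
          Iso.refl_inv, Category.assoc, tpowHom]
        exact (Category.assoc _ _ _).symm
    · refine ⟨k, l + 1, (tensorIso ea (Iso.refl a)) ≪≫ α_ _ _ _,
        (tensorIso eb (Iso.refl b)) ≪≫ α_ _ _ _, ?_, by omega, ?_⟩
      · rw [Fin.sum_univ_castSucc, if_neg hv, hk]
        rfl
      · show wHom f g N (Fin.init v) ⊗ₘ (if v (Fin.last N) then f else g) = _
        rw [if_neg hv, hw, comp_tensor_left,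
          comp_tensor_right (tpowHom f k ⊗ₘ tpowHom g l), assoc_fact]
        simp only [Iso.trans_hom, Iso.trans_inv, tensorIso_hom, tensorIso_inv, Iso.refl_hom,
          Iso.refl_inv, Category.assoc, tpowHom]
        exact (Category.assoc _ _ _).symm

end Braided

section Pre

variable [Preadditive C] [MonoidalPreadditive C]

lemma tpowHom_eq_zero_of_le {a b : C} {f : a ⟶ b} {m k : ℕ} (h : tpowHom f m = 0)
    (hk : m ≤ k) : tpowHom f k = 0 := by
  obtain ⟨j, rfl⟩ := Nat.exists_eq_add_of_le hk
  clear hk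
  induction j with
  | zero => exact h
  | succ j ih =>
      show tpowHom f (m + j) ⊗ₘ f = 0
      rw [ih, MonoidalPreadditive.zero_tensor]

lemma my_tensor_neg {a b x y : C} (u : x ⟶ y) (f : a ⟶ b) : u ⊗ₘ (-f) = -(u ⊗ₘ f) := by
  apply eq_neg_of_add_eq_zero_left
  rw [← MonoidalPreadditive.tensor_add]
  simp

lemma my_neg_tensor {a b x y : C} (u : x ⟶ y) (f : a ⟶ b) : (-u) ⊗ₘ f = -(u ⊗ₘ f) := by
  apply eq_neg_of_add_eq_zero_left
  rw [← MonoidalPreadditive.add_tensor]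
  simp

lemma tpowHom_neg {a b : C} (f : a ⟶ b) :
    ∀ n, tpowHom (-f) n = tpowHom f n ∨ tpowHom (-f) n = -(tpowHom f n)
  | 0 => Or.inl rfl
  | n + 1 => by
    rcases tpowHom_neg f n with h | h
    · right
      show tpowHom (-f) n ⊗ₘ (-f) = -(tpowHom f n ⊗ₘ f)
      rw [h, my_tensor_neg]
    · left
      show tpowHom (-f) n ⊗ₘ (-f) = tpowHom f n ⊗ₘ f
      rw [h, my_neg_tensor, my_tensor_neg, neg_neg]

lemma tpow_add_expand {a b : C} (f g : a ⟶ b) :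
    ∀ N, tpowHom (f + g) N = ∑ v : Fin N → Bool, wHom f g N v
  | 0 => by
    rw [Fintype.sum_unique]
    rfl
  | N + 1 => by
    have key : ∀ (x : Bool) (v : Fin N → Bool),
        wHom f g (N + 1) (Fin.snoc v x) = wHom f g N v ⊗ₘ (if x then f else g) := by
      intro x v
      rw [wHom_succ, Fin.init_snoc, Fin.snoc_last]
    calc tpowHom (f + g) (N + 1) = show tpowObj a (N + 1) ⟶ tpowObj b (N + 1) from tpowHom (f + g) N ⊗ₘ (f + g) := rfl
      _ = show tpowObj a (N + 1) ⟶ tpowObj b (N + 1) from (∑ v : Fin N → Bool, wHom f g N v) ⊗ₘ (f + g) := by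
            rw [tpow_add_expand f g N]
      _ = show tpowObj a (N + 1) ⟶ tpowObj b (N + 1) from (∑ v : Fin N → Bool, wHom f g N v ⊗ₘ f)
            + (∑ v : Fin N → Bool, wHom f g N v ⊗ₘ g) := by
            rw [MonoidalPreadditive.tensor_add, sum_tensor, sum_tensor]
      _ = ∑ v : Fin (N + 1) → Bool, wHom f g (N + 1) v := by
            have hsum := Fintype.sum_equiv (Fin.snocEquiv (fun _ => Bool))
              (fun p : Bool × (Fin N → Bool) => wHom f g N p.2 ⊗ₘ (if p.1 then f else g))
              (wHom f g (N + 1)) (fun p => (key p.1 p.2).symm)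
            refine Eq.trans ?_ hsum
            rw [Fintype.sum_prod_type, Fintype.sum_bool]
            simp
            rfl

end Pre

section Both

variable [Preadditive C] [MonoidalPreadditive C] [BraidedCategory C]

lemma wHom_zero {a b : C} {f g : a ⟶ b} {m : ℕ} (hf : tpowHom f m = 0) (N : ℕ)
    (v : Fin N → Bool) (hm : m ≤ ∑ i, if v i then 1 else 0) : wHom f g N v = 0 := by
  obtain ⟨k, l, ea, eb, hk, hkl, hw⟩ := wHom_factor f g N v
  rw [hw, tpowHom_eq_zero_of_le hf (by omega), MonoidalPreadditive.zero_tensor]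
  simp

lemma wHom_flip {a b : C} (f g : a ⟶ b) :
    ∀ N (v : Fin N → Bool), wHom f g N v = wHom g f N (fun i => !(v i))
  | 0, _ => rfl
  | N + 1, v => by
    rw [wHom_succ, wHom_succ, wHom_flip f g N (Fin.init v)]
    have h1 : (Fin.init fun i => !(v i)) = fun i => !(Fin.init v i) := rfl
    rw [h1]
    cases v (Fin.last N) <;> simp <;> rfl

lemma word_zero {a b : C} {f g : a ⟶ b} {m n : ℕ} (hf : tpowHom f m = 0)
    (hg : tpowHom g n = 0) (v : Fin (m + n) → Bool) : wHom f g (m + n) v = 0 := by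
  by_cases hmk : m ≤ ∑ i, if v i then 1 else 0
  · exact wHom_zero hf _ v hmk
  · rw [wHom_flip]
    apply wHom_zero hg
    show n ≤ ∑ i, if !(v i) then 1 else 0
    have htot : ((∑ i : Fin (m + n), if v i then 1 else 0)
        + (∑ i : Fin (m + n), if !(v i) then 1 else 0)) = m + n := by
      rw [← Finset.sum_add_distrib]
      have h1 : ∀ i ∈ Finset.univ, (((if v i then 1 else 0) + (if !(v i) then 1 else 0) : ℕ))
          = 1 := fun i _ => by cases v i <;> rfl
      rw [Finset.sum_congr rfl h1]
      simp
    omega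

end Both

/-- in an `F`-linear additive rigid symmetric monoidal category, the
smash-nilpotent morphisms form an additive subgroup of each Hom-group. -/
theorem smashNil_isAddSubgroup (F : Type*) [Field F] [Preadditive C] [Linear F C]
    [MonoidalPreadditive C] [MonoidalLinear F C] [SymmetricCategory C] [RigidCategory C]
    [Limits.HasFiniteBiproducts C] (a b : C) :
    ∃ S : AddSubgroup (a ⟶ b),
      (S : Set (a ⟶ b)) = {f : a ⟶ b | ∃ n > 0, tpowHom f n = 0} := by
  refine ⟨{
    carrier := {f : a ⟶ b | ∃ n > 0, tpowHom f n = 0}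
    zero_mem' := ⟨1, one_pos, by
      show tpowHom (0 : a ⟶ b) 0 ⊗ₘ (0 : a ⟶ b) = 0
      rw [MonoidalPreadditive.tensor_zero]⟩
    add_mem' := by
      rintro f g ⟨m, hm, hfm⟩ ⟨n, hn, hgn⟩
      exact ⟨m + n, by omega, by
        rw [tpow_add_expand]
        exact Finset.sum_eq_zero fun v _ => word_zero hfm hgn v⟩
    neg_mem' := by
      rintro f ⟨n, hn, hfn⟩
      refine ⟨n, hn, ?_⟩
      rcases tpowHom_neg f n with h | h <;> rw [h, hfn] <;> simp }, rfl⟩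

end
end

section
/- Let C be an idempotent complete additive category and I an ideal of C such that I(a,a) is a nilpotent ideal of End_C(a) for every object a. Then the quotient category C/I is idempotent complete. -/
open CategoryTheory

universe u v

/-- A (categorical) ideal of a preadditive category: an additive subgroup of each
Hom-group, closed under composition with arbitrary morphisms on either side. -/
structure CatIdeal (C : Type u) [Category.{v} C] [Preadditive C] where
  I : ∀ a b : C, AddSubgroup (a ⟶ b)
  comp_mem_left : ∀ {a b c : C} (f : a ⟶ b), f ∈ I a b → ∀ g : b ⟶ c, f ≫ g ∈ I a c
  comp_mem_right : ∀ {a b c : C} (g : b ⟶ c), g ∈ I b c → ∀ f : a ⟶ b, f ≫ g ∈ I a c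

/-- The ideal `I(a,a) ⊆ End(a)` is nilpotent. -/
def CatIdeal.EndNilpotent {C : Type u} [Category.{v} C] [Preadditive C]
    (J : CatIdeal C) (a : C) : Prop :=
  ∃ N > 0, ∀ l : List (a ⟶ a), l.length = N →
    (∀ f ∈ l, f ∈ J.I a a) → l.foldr (· ≫ ·) (𝟙 a) = 0

section Aux

variable {C : Type u} [Category.{v} C] [Preadditive C] (J : CatIdeal C) {X : C}

lemma catIdeal_mul_mem_left {u v : End X} (hu : u ∈ J.I X X) : u * v ∈ J.I X X :=
  J.comp_mem_right u hu v

lemma catIdeal_mul_mem_right {u v : End X} (hu : u ∈ J.I X X) : v * u ∈ J.I X X :=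
  J.comp_mem_left u hu v

omit [Preadditive C] in
lemma pow_eq_foldr (z : End X) : ∀ n : ℕ,
    z ^ n = (List.replicate n z).foldr (· ≫ ·) (𝟙 X)
  | 0 => rfl
  | n + 1 => by
    rw [List.replicate_succ, List.foldr_cons, ← pow_eq_foldr z n, pow_succ]
    rfl

end Aux

/-- if `C` is idempotent complete and every `I(a,a)` is nilpotent,
then the quotient category `C/I` is idempotent complete: every morphism `e`
which is idempotent modulo `I` splits in `C/I`. -/
theorem quotient_by_nilpotent_ideal_idempotentComplete {C : Type u} [Category.{v} C]
    [Preadditive C] [IsIdempotentComplete C]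
    (J : CatIdeal C) (hnil : ∀ a : C, J.EndNilpotent a)
    {X : C} (e : X ⟶ X) (he : e ≫ e - e ∈ J.I X X) :
    ∃ (Y : C) (p : X ⟶ Y) (i : Y ⟶ X),
      i ≫ p - 𝟙 Y ∈ J.I Y Y ∧ p ≫ i - e ∈ J.I X X := by
  obtain ⟨N, hN, hfold⟩ := hnil X
  set x : End X := e with hx
  have hsq : x * x - x ∈ J.I X X := he
  have hsq' : x - x ^ 2 ∈ J.I X X := by
    have := (J.I X X).neg_mem hsq
    rwa [neg_sub, ← pow_two] at this
  -- nilpotency of x - x^2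
  have hnilp : (x - x ^ 2) ^ N = 0 := by
    rw [pow_eq_foldr]
    exact hfold _ List.length_replicate fun f hf => by
      rw [List.eq_of_mem_replicate hf]; exact hsq'
  -- the honest idempotent
  set e' : End X := 1 - (1 - x ^ N) ^ N with he'def
  have he' : IsIdempotentElem e' := isIdempotentElem_one_sub_one_sub_pow_pow x N hnilp
  -- x^k - x ∈ I for k ≥ 1
  have hpow : ∀ k : ℕ, x ^ (k + 1) - x ∈ J.I X X := by
    intro k
    induction k with
    | zero => simpa using (J.I X X).zero_mem
    | succ k ih =>
      have : x ^ (k + 1 + 1) - x = (x ^ (k + 1) - x) * x + (x * x - x) := by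
        rw [pow_succ]; noncomm_ring
      rw [this]
      exact (J.I X X).add_mem (catIdeal_mul_mem_left J ih) hsq
  have hyx : x ^ N - x ∈ J.I X X := by
    obtain ⟨M, rfl⟩ : ∃ M, N = M + 1 := ⟨N - 1, (Nat.succ_pred_eq_of_pos hN).symm⟩
    simpa using hpow M
  obtain ⟨y, hy⟩ : ∃ y : End X, y = x ^ N := ⟨_, rfl⟩
  rw [← hy] at hyx he'def
  have hy2 : y * y - y ∈ J.I X X := by
    have : y * y - y = y * (y - x) + (y - x) * x + (x * x - x) + -(y - x) := by noncomm_ring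
    rw [this]
    exact (J.I X X).add_mem ((J.I X X).add_mem
      ((J.I X X).add_mem (catIdeal_mul_mem_right J hyx) (catIdeal_mul_mem_left J hyx)) hsq)
      ((J.I X X).neg_mem hyx)
  have hz2 : (1 - y) * (1 - y) - (1 - y) ∈ J.I X X := by
    have : (1 - y) * (1 - y) - (1 - y) = y * y - y := by noncomm_ring
    rwa [this]
  have hzpow : ∀ k : ℕ, (1 - y) ^ (k + 1) - (1 - y) ∈ J.I X X := by
    intro k
    induction k with
    | zero => simpa using (J.I X X).zero_mem
    | succ k ih =>
      have : (1 - y) ^ (k + 1 + 1) - (1 - y)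
          = ((1 - y) ^ (k + 1) - (1 - y)) * (1 - y) + ((1 - y) * (1 - y) - (1 - y)) := by
        rw [pow_succ]; noncomm_ring
      rw [this]
      exact (J.I X X).add_mem (catIdeal_mul_mem_left J ih) hz2
  have hex : e' - x ∈ J.I X X := by
    obtain ⟨M, rfl⟩ : ∃ M, N = M + 1 := ⟨N - 1, (Nat.succ_pred_eq_of_pos hN).symm⟩
    have h1 := (J.I X X).neg_mem (hzpow M)
    have : e' - x = -((1 - y) ^ (M + 1) - (1 - y)) + (y - x) := by
      rw [he'def]; noncomm_ring
    rw [this]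
    exact (J.I X X).add_mem h1 hyx
  -- split the idempotent e'
  have hcomp : (e' : X ⟶ X) ≫ e' = e' := he'.eq
  obtain ⟨Y, i, p, hip, hpi⟩ := IsIdempotentComplete.idempotents_split X e' hcomp
  refine ⟨Y, p, i, ?_, ?_⟩
  · rw [hip, sub_self]; exact (J.I Y Y).zero_mem
  · rw [hpi]; exact hex
end
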